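/- Let z = x + iy be a complex number with y ≠ 0. Then the function S, defined by S(w) = arcsin(β(w)) + i·sign(Im w)·arcosh(α(w)) with α(w) = (|w−1|+|w+1|)/2 and β(w) = (|w+1|−|w−1|)/2, is complex differentiable at z with derivative S′(z) = 1/Y(z), where Y(w) = α(w)·√(1−β(w)²) − i·sign(Im w)·β(w)·√(α(w)²−1). -/

import Mathlib

open Complex

/-- Real inverse hyperbolic cosine, `arcosh t = ln (t + √(t²-1))`. -/
noncomputable def arcosh (t : ℝ) : ℝ := Real.log (t + Real.sqrt (t ^ 2 - 1))

/-- `α(w) = (|w-1| + |w+1|)/2`. -/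
noncomputable def alpha (w : ℂ) : ℝ := (‖w - 1‖ + ‖w + 1‖) / 2

/-- `β(w) = (|w+1| - |w-1|)/2`. -/
noncomputable def beta (w : ℂ) : ℝ := (‖w + 1‖ - ‖w - 1‖) / 2

/-- Principal branch `S(w)` of the inverse sine. -/
noncomputable def S (w : ℂ) : ℂ :=
  (Real.arcsin (beta w) : ℝ) + Complex.I * (Real.sign w.im : ℝ) * (arcosh (alpha w) : ℝ)

/-- Principal branch `Y(w)` of `√(1-w²)`. -/
noncomputable def Y (w : ℂ) : ℂ :=
  (alpha w * Real.sqrt (1 - (beta w) ^ 2) : ℝ) -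
    Complex.I * (Real.sign w.im : ℝ) * (beta w * Real.sqrt ((alpha w) ^ 2 - 1) : ℝ)

lemma sq_abs_add_one (w : ℂ) : (‖w + 1‖) ^ 2 = (w.re + 1) ^ 2 + w.im ^ 2 := by
  rw [Complex.sq_norm, Complex.normSq_apply]
  simp [Complex.add_re, Complex.add_im]
  ring

lemma sq_abs_sub_one (w : ℂ) : (‖w - 1‖) ^ 2 = (w.re - 1) ^ 2 + w.im ^ 2 := by
  rw [Complex.sq_norm, Complex.normSq_apply]
  simp [Complex.sub_re, Complex.sub_im]
  ring

lemma one_le_alpha (w : ℂ) : 1 ≤ alpha w := by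
  have h : ‖(w + 1) - (w - 1)‖ ≤ ‖w + 1‖ + ‖w - 1‖ := norm_sub_le _ _
  have h2 : (w + 1) - (w - 1) = 2 := by ring
  rw [h2] at h
  rw [show ((2 : ℂ)) = ((2 : ℝ) : ℂ) by norm_num, Complex.norm_real, Real.norm_eq_abs] at h
  unfold alpha
  rw [_root_.abs_of_nonneg (by norm_num : (0:ℝ) ≤ 2)] at h
  linarith

lemma abs_beta_le_one (w : ℂ) : |beta w| ≤ 1 := by
  have h : |‖w + 1‖ - ‖w - 1‖| ≤ ‖(w + 1) - (w - 1)‖ := abs_norm_sub_norm_le _ _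
  have h2 : (w + 1) - (w - 1) = 2 := by ring
  rw [h2] at h
  rw [show ((2 : ℂ)) = ((2 : ℝ) : ℂ) by norm_num, Complex.norm_real, Real.norm_eq_abs,
    _root_.abs_of_nonneg (by norm_num : (0:ℝ) ≤ 2)] at h
  unfold beta
  rw [abs_div, _root_.abs_of_nonneg (by norm_num : (0:ℝ) ≤ 2)]
  linarith

lemma beta_sq_le_one (w : ℂ) : beta w ^ 2 ≤ 1 := by
  have := abs_beta_le_one w
  nlinarith [abs_nonneg (beta w), _root_.sq_abs (beta w)]

lemma alpha_mul_beta (w : ℂ) : alpha w * beta w = w.re := by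
  have h1 := sq_abs_add_one w
  have h2 := sq_abs_sub_one w
  unfold alpha beta
  nlinarith [h1, h2]

lemma key_identity (w : ℂ) : (alpha w ^ 2 - 1) * (1 - beta w ^ 2) = w.im ^ 2 := by
  have h1 := sq_abs_add_one w
  have h2 := sq_abs_sub_one w
  unfold alpha beta
  nlinarith [h1, h2]

lemma one_lt_alpha (w : ℂ) (h : w.im ≠ 0) : 1 < alpha w := by
  rcases lt_or_eq_of_le (one_le_alpha w) with hlt | heq
  · exact hlt
  · exfalso
    have hk := key_identity w
    rw [← heq] at hk
    have h0 : w.im ^ 2 = 0 := by nlinarith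
    exact h (pow_eq_zero_iff two_ne_zero |>.1 h0)

lemma beta_sq_lt_one (w : ℂ) (h : w.im ≠ 0) : beta w ^ 2 < 1 := by
  rcases lt_or_eq_of_le (beta_sq_le_one w) with hlt | heq
  · exact hlt
  · exfalso
    have hk := key_identity w
    rw [heq] at hk
    have h0 : w.im ^ 2 = 0 := by nlinarith
    exact h (pow_eq_zero_iff two_ne_zero |>.1 h0)

lemma cosh_arcosh {t : ℝ} (ht : 1 ≤ t) : Real.cosh (arcosh t) = t := by
  have hs : Real.sqrt (t ^ 2 - 1) ^ 2 = t ^ 2 - 1 := Real.sq_sqrt (by nlinarith)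
  have hs0 : 0 ≤ Real.sqrt (t ^ 2 - 1) := Real.sqrt_nonneg _
  set s := Real.sqrt (t ^ 2 - 1)
  have hpos : 0 < t + s := by linarith
  have hexp : Real.exp (arcosh t) = t + s := Real.exp_log hpos
  have hne : t + s ≠ 0 := ne_of_gt hpos
  have hexpneg : Real.exp (-(arcosh t)) = t - s := by
    rw [Real.exp_neg, hexp]
    field_simp
    nlinarith
  rw [Real.cosh_eq, hexp, hexpneg]
  ring

lemma sinh_arcosh {t : ℝ} (ht : 1 ≤ t) : Real.sinh (arcosh t) = Real.sqrt (t ^ 2 - 1) := by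
  have hs : Real.sqrt (t ^ 2 - 1) ^ 2 = t ^ 2 - 1 := Real.sq_sqrt (by nlinarith)
  have hs0 : 0 ≤ Real.sqrt (t ^ 2 - 1) := Real.sqrt_nonneg _
  set s := Real.sqrt (t ^ 2 - 1)
  have hpos : 0 < t + s := by linarith
  have hexp : Real.exp (arcosh t) = t + s := Real.exp_log hpos
  have hne : t + s ≠ 0 := ne_of_gt hpos
  have hexpneg : Real.exp (-(arcosh t)) = t - s := by
    rw [Real.exp_neg, hexp]
    field_simp
    nlinarith
  rw [Real.sinh_eq, hexp, hexpneg]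
  ring

lemma S_rewrite (w : ℂ) :
    S w = ((Real.arcsin (beta w) : ℝ) : ℂ) +
      ((Real.sign w.im * arcosh (alpha w) : ℝ) : ℂ) * Complex.I := by
  unfold S
  push_cast
  ring

lemma sqrt_mul_sqrt (w : ℂ) :
    Real.sqrt (1 - beta w ^ 2) * Real.sqrt (alpha w ^ 2 - 1) = |w.im| := by
  rw [← Real.sqrt_mul (by nlinarith [beta_sq_le_one w])]
  rw [show (1 - beta w ^ 2) * (alpha w ^ 2 - 1) = w.im ^ 2 by nlinarith [key_identity w]]
  exact Real.sqrt_sq_eq_abs _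

lemma sin_S (w : ℂ) (h : w.im ≠ 0) : Complex.sin (S w) = w := by
  rw [S_rewrite, Complex.sin_add, Complex.sin_mul_I, Complex.cos_mul_I]
  rw [← Complex.ofReal_sin, ← Complex.ofReal_cos, ← Complex.ofReal_sinh, ← Complex.ofReal_cosh]
  have hb1 : -1 ≤ beta w := by have := abs_beta_le_one w; cases abs_le.1 this; assumption
  have hb2 : beta w ≤ 1 := by have := abs_beta_le_one w; exact (abs_le.1 this).2
  have ha := one_le_alpha w
  rw [Real.sin_arcsin hb1 hb2, Real.cos_arcsin]
  have hsign : Real.sign w.im * w.im = |w.im| := by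
    rcases lt_or_gt_of_ne h with hlt | hgt
    · rw [Real.sign_of_neg hlt, abs_of_neg hlt]; ring
    · rw [Real.sign_of_pos hgt, abs_of_pos hgt]; ring
  have hsgn_sq : Real.sign w.im * Real.sign w.im = 1 := by
    rcases lt_or_gt_of_ne h with hlt | hgt
    · rw [Real.sign_of_neg hlt]; norm_num
    · rw [Real.sign_of_pos hgt]; norm_num
  have hcosh : Real.cosh (Real.sign w.im * arcosh (alpha w)) = alpha w := by
    rcases lt_or_gt_of_ne h with hlt | hgt
    · rw [Real.sign_of_neg hlt]
      rw [show (-1 : ℝ) * arcosh (alpha w) = -(arcosh (alpha w)) by ring, Real.cosh_neg]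
      exact cosh_arcosh ha
    · rw [Real.sign_of_pos hgt, one_mul]
      exact cosh_arcosh ha
  have hsinh : Real.sinh (Real.sign w.im * arcosh (alpha w)) =
      Real.sign w.im * Real.sqrt (alpha w ^ 2 - 1) := by
    rcases lt_or_gt_of_ne h with hlt | hgt
    · rw [Real.sign_of_neg hlt]
      rw [show (-1 : ℝ) * arcosh (alpha w) = -(arcosh (alpha w)) by ring, Real.sinh_neg]
      rw [sinh_arcosh ha]
      ring
    · rw [Real.sign_of_pos hgt, one_mul, sinh_arcosh ha]
      ring
  rw [hcosh, hsinh]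
  apply Complex.ext
  · simp [alpha_mul_beta w, mul_comm]
  · simp
    have : Real.sqrt (1 - beta w ^ 2) * (Real.sign w.im * Real.sqrt (alpha w ^ 2 - 1)) =
        Real.sign w.im * |w.im| := by
      rw [← sqrt_mul_sqrt w]; ring
    rw [this]
    rcases lt_or_gt_of_ne h with hlt | hgt
    · rw [Real.sign_of_neg hlt, abs_of_neg hlt]; ring
    · rw [Real.sign_of_pos hgt, abs_of_pos hgt]; ring

lemma cos_S (w : ℂ) (h : w.im ≠ 0) : Complex.cos (S w) = Y w := by
  rw [S_rewrite, Complex.cos_add, Complex.sin_mul_I, Complex.cos_mul_I]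
  rw [← Complex.ofReal_sin, ← Complex.ofReal_cos, ← Complex.ofReal_sinh, ← Complex.ofReal_cosh]
  have hb1 : -1 ≤ beta w := by have := abs_beta_le_one w; exact (abs_le.1 this).1
  have hb2 : beta w ≤ 1 := by have := abs_beta_le_one w; exact (abs_le.1 this).2
  have ha := one_le_alpha w
  rw [Real.sin_arcsin hb1 hb2, Real.cos_arcsin]
  have hcosh : Real.cosh (Real.sign w.im * arcosh (alpha w)) = alpha w := by
    rcases lt_or_gt_of_ne h with hlt | hgt
    · rw [Real.sign_of_neg hlt]
      rw [show (-1 : ℝ) * arcosh (alpha w) = -(arcosh (alpha w)) by ring, Real.cosh_neg]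
      exact cosh_arcosh ha
    · rw [Real.sign_of_pos hgt, one_mul]
      exact cosh_arcosh ha
  have hsinh : Real.sinh (Real.sign w.im * arcosh (alpha w)) =
      Real.sign w.im * Real.sqrt (alpha w ^ 2 - 1) := by
    rcases lt_or_gt_of_ne h with hlt | hgt
    · rw [Real.sign_of_neg hlt]
      rw [show (-1 : ℝ) * arcosh (alpha w) = -(arcosh (alpha w)) by ring, Real.sinh_neg]
      rw [sinh_arcosh ha]
      ring
    · rw [Real.sign_of_pos hgt, one_mul, sinh_arcosh ha]
      ring
  rw [hcosh, hsinh]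
  unfold Y
  push_cast
  ring

lemma Y_ne_zero (w : ℂ) (h : w.im ≠ 0) : Y w ≠ 0 := by
  intro hY
  have hre : (Y w).re = 0 := by rw [hY]; simp
  unfold Y at hre
  simp at hre
  have ha : 0 < alpha w := lt_of_lt_of_le one_pos (one_le_alpha w)
  have hb : 0 < Real.sqrt (1 - beta w ^ 2) :=
    Real.sqrt_pos.2 (by nlinarith [beta_sq_lt_one w h])
  rcases hre with h1 | h1
  · exact absurd h1 (ne_of_gt ha)
  · exact absurd h1 (ne_of_gt hb)

lemma continuousAt_S (z : ℂ) (h : z.im ≠ 0) : ContinuousAt S z := by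
  have hev : ∀ᶠ w in nhds z, Real.sign w.im = Real.sign z.im := by
    rcases lt_or_gt_of_ne h with hlt | hgt
    · have : ∀ᶠ w : ℂ in nhds z, w.im < 0 :=
        (Complex.continuous_im.continuousAt).eventually_lt continuousAt_const hlt
      filter_upwards [this] with w hw
      rw [Real.sign_of_neg hw, Real.sign_of_neg hlt]
    · have : ∀ᶠ w : ℂ in nhds z, 0 < w.im :=
        continuousAt_const.eventually_lt (Complex.continuous_im.continuousAt) hgt
      filter_upwards [this] with w hw
      rw [Real.sign_of_pos hw, Real.sign_of_pos hgt]
  have hcα : Continuous alpha := by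
    unfold alpha
    exact ((continuous_norm.comp (continuous_id.sub continuous_const)).add
      (continuous_norm.comp (continuous_id.add continuous_const))).div_const 2
  have hcβ : Continuous beta := by
    unfold beta
    exact ((continuous_norm.comp (continuous_id.add continuous_const)).sub
      (continuous_norm.comp (continuous_id.sub continuous_const))).div_const 2
  have harc : ContinuousAt (fun w => arcosh (alpha w)) z := by
    unfold arcosh
    apply ContinuousAt.comp (g := Real.log)
    · apply Real.continuousAt_log
      have := one_le_alpha z
      have := Real.sqrt_nonneg (alpha z ^ 2 - 1)
      positivity
    · exact (hcα.continuousAt.add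
        ((Real.continuous_sqrt.comp ((hcα.pow 2).sub continuous_const)).continuousAt))
  have hg : ContinuousAt (fun w : ℂ =>
      ((Real.arcsin (beta w) : ℝ) : ℂ) +
        Complex.I * ((Real.sign z.im : ℝ) : ℂ) * ((arcosh (alpha w) : ℝ) : ℂ)) z := by
    apply ContinuousAt.add
    · exact Complex.continuous_ofReal.continuousAt.comp
        ((Real.continuous_arcsin.comp hcβ).continuousAt)
    · exact (continuousAt_const.mul continuousAt_const).mul
        (Complex.continuous_ofReal.continuousAt.comp harc)
  apply hg.congr
  filter_upwards [hev] with w hw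
  unfold S
  rw [hw]

theorem stmt10 (z : ℂ) (h : z.im ≠ 0) : HasDerivAt S (1 / Y z) z := by
  have hsin : HasDerivAt Complex.sin (Y z) (S z) := by
    have := Complex.hasDerivAt_sin (S z)
    rwa [cos_S z h] at this
  have hfg : ∀ᶠ w in nhds z, Complex.sin (S w) = w := by
    have : ∀ᶠ w : ℂ in nhds z, w.im ≠ 0 :=
      (Complex.continuous_im.continuousAt).eventually_ne h
    filter_upwards [this] with w hw
    exact sin_S w hw
  have := HasDerivAt.of_local_left_inverse (continuousAt_S z h) hsin (Y_ne_zero z h) hfg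
  rwa [one_div]
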